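/- arXiv:1605.08018 — 4 statements merged into one kernel-verified Lean document; each statement's English description precedes it below -/
import Mathlib

section
/- The full subcategory of S-contramodule R-modules is closed under kernels, extensions, and arbitrary products in the category of R-modules. In particular, for any morphism f : C → D of S-contramodule R-modules, the kernel of f is an S-contramodule. -/
open CategoryTheory

section Elementary

variable {R : Type} [CommRing R]
variable {Q0 Q1 Q2 : Type} [AddCommGroup Q0] [Module R Q0] [AddCommGroup Q1] [Module R Q1]
  [AddCommGroup Q2] [Module R Q2]

/-- "Hom complex is zero-ish at degree 0": every map out of `Q0` killing `d10` is zero. -/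
def AuxC0 (d10 : Q1 →ₗ[R] Q0) (N : Type) [AddCommGroup N] [Module R N] : Prop :=
  ∀ f : Q0 →ₗ[R] N, f.comp d10 = 0 → f = 0

/-- "Hom complex exact at degree 1". -/
def AuxC1 (d10 : Q1 →ₗ[R] Q0) (d21 : Q2 →ₗ[R] Q1) (N : Type) [AddCommGroup N] [Module R N] :
    Prop :=
  ∀ g : Q1 →ₗ[R] N, g.comp d21 = 0 → ∃ h : Q0 →ₗ[R] N, h.comp d10 = g

variable {d10 : Q1 →ₗ[R] Q0} {d21 : Q2 →ₗ[R] Q1}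

lemma factor_through_injective {A B C : Type} [AddCommGroup A] [Module R A] [AddCommGroup B]
    [Module R B] [AddCommGroup C] [Module R C] (i : B →ₗ[R] C) (hi : Function.Injective i)
    (f : A →ₗ[R] C) (hf : ∀ x, f x ∈ LinearMap.range i) :
    ∃ g : A →ₗ[R] B, i.comp g = f := by
  refine ⟨(LinearEquiv.ofInjective i hi).symm.toLinearMap.comp
    (f.codRestrict (LinearMap.range i) hf), ?_⟩
  ext x
  set z := (f.codRestrict (LinearMap.range i) hf) x with hz
  have h1 := congrArg Subtype.val ((LinearEquiv.ofInjective i hi).apply_symm_apply z)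
  rw [LinearEquiv.ofInjective_apply] at h1
  simp only [LinearMap.comp_apply, LinearEquiv.coe_toLinearMap]
  exact h1.trans rfl

lemma auxC0_ker {C D : Type} [AddCommGroup C] [Module R C] [AddCommGroup D] [Module R D]
    (hC : AuxC0 d10 C) (f : C →ₗ[R] D) : AuxC0 d10 (LinearMap.ker f) := by
  intro g hg
  have h1 : ((LinearMap.ker f).subtype.comp g).comp d10 = 0 := by
    rw [LinearMap.comp_assoc, hg, LinearMap.comp_zero]
  have h2 := hC _ h1
  ext x
  have := LinearMap.congr_fun h2 x
  simpa using this

lemma auxC1_ker {C D : Type} [AddCommGroup C] [Module R C] [AddCommGroup D] [Module R D]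
    (hC1 : AuxC1 d10 d21 C) (hD0 : AuxC0 d10 D) (f : C →ₗ[R] D) :
    AuxC1 d10 d21 (LinearMap.ker f) := by
  intro g hg
  set g' : Q1 →ₗ[R] C := (LinearMap.ker f).subtype.comp g with hg'def
  have hg' : g'.comp d21 = 0 := by
    rw [hg'def, LinearMap.comp_assoc, hg, LinearMap.comp_zero]
  obtain ⟨h, hh⟩ := hC1 g' hg'
  have hfh : (f.comp h).comp d10 = 0 := by
    rw [LinearMap.comp_assoc, hh]
    ext x
    simp only [LinearMap.comp_apply, Submodule.coe_subtype, LinearMap.zero_apply, g']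
    exact (g x).2
  have hker : ∀ y, h y ∈ LinearMap.ker f := by
    intro y
    have := LinearMap.congr_fun (hD0 _ hfh) y
    simpa using this
  refine ⟨h.codRestrict (LinearMap.ker f) hker, ?_⟩
  ext x
  have := LinearMap.congr_fun hh x
  simpa [g'] using this

lemma auxC0_ext {C' C C'' : Type} [AddCommGroup C'] [Module R C'] [AddCommGroup C] [Module R C]
    [AddCommGroup C''] [Module R C''] (i : C' →ₗ[R] C) (p : C →ₗ[R] C'')
    (hi : Function.Injective i) (hrange : LinearMap.range i = LinearMap.ker p)
    (h0' : AuxC0 d10 C') (h0'' : AuxC0 d10 C'') : AuxC0 d10 C := by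
  intro f hf
  have hpf : (p.comp f).comp d10 = 0 := by
    rw [LinearMap.comp_assoc, hf, LinearMap.comp_zero]
  have hpf0 := h0'' _ hpf
  have hmem : ∀ x, f x ∈ LinearMap.range i := by
    intro x
    rw [hrange, LinearMap.mem_ker]
    exact LinearMap.congr_fun hpf0 x
  obtain ⟨f', hf'⟩ := factor_through_injective i hi f hmem
  have hf'd : f'.comp d10 = 0 := by
    apply LinearMap.ext
    intro x
    apply hi
    have : i ((f'.comp d10) x) = (f.comp d10) x := by
      simpa [LinearMap.comp_apply] using LinearMap.congr_fun hf' (d10 x)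
    rw [this, hf]
    simp
  have := h0' _ hf'd
  rw [this] at hf'
  rw [← hf']
  simp

lemma auxC1_ext {C' C C'' : Type} [AddCommGroup C'] [Module R C'] [AddCommGroup C] [Module R C]
    [AddCommGroup C''] [Module R C''] (i : C' →ₗ[R] C) (p : C →ₗ[R] C'')
    (hi : Function.Injective i) (hp : Function.Surjective p)
    (hrange : LinearMap.range i = LinearMap.ker p) (hd : d10.comp d21 = 0)
    (hproj : Module.Projective R Q0)
    (h1' : AuxC1 d10 d21 C') (h1'' : AuxC1 d10 d21 C'') : AuxC1 d10 d21 C := by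
  intro g hg
  have hpg : (p.comp g).comp d21 = 0 := by
    rw [LinearMap.comp_assoc, hg, LinearMap.comp_zero]
  obtain ⟨h, hh⟩ := h1'' _ hpg
  obtain ⟨hhat, hhhat⟩ := Module.projective_lifting_property p h hp
  set g0 : Q1 →ₗ[R] C := g - hhat.comp d10 with hg0def
  have hmem : ∀ x, g0 x ∈ LinearMap.range i := by
    intro x
    rw [hrange, LinearMap.mem_ker]
    have h1 : p (hhat (d10 x)) = h (d10 x) := LinearMap.congr_fun hhhat (d10 x)
    have h2 : h (d10 x) = p (g x) := LinearMap.congr_fun hh x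
    simp [hg0def, h1, h2]
  obtain ⟨g', hg'⟩ := factor_through_injective i hi g0 hmem
  have hg'd : g'.comp d21 = 0 := by
    apply LinearMap.ext
    intro x
    apply hi
    have h1 : i ((g'.comp d21) x) = g0 (d21 x) := LinearMap.congr_fun hg' (d21 x)
    have h2 : g (d21 x) = 0 := LinearMap.congr_fun hg x
    have h3 : d10 (d21 x) = 0 := LinearMap.congr_fun hd x
    show i ((g'.comp d21) x) = i ((0 : Q2 →ₗ[R] C') x)
    rw [h1, hg0def]
    simp [h2, h3]
  obtain ⟨h', hh'⟩ := h1' _ hg'd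
  refine ⟨hhat + i.comp h', ?_⟩
  have : (i.comp h').comp d10 = g0 := by
    rw [LinearMap.comp_assoc, hh', hg']
  calc (hhat + i.comp h').comp d10 = hhat.comp d10 + (i.comp h').comp d10 := by
        ext x; simp [LinearMap.add_comp]
    _ = hhat.comp d10 + g0 := by rw [this]
    _ = g := by rw [hg0def]; abel

lemma auxC0_pi {ι : Type} (M : ι → Type) [∀ j, AddCommGroup (M j)] [∀ j, Module R (M j)]
    (hM : ∀ j, AuxC0 d10 (M j)) : AuxC0 d10 (∀ j, M j) := by
  intro f hf
  refine LinearMap.ext fun x => funext fun j => ?_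
  have hj : ((LinearMap.proj j (R := R) (φ := M)).comp f).comp d10 = 0 := by
    rw [LinearMap.comp_assoc, hf, LinearMap.comp_zero]
  simpa using LinearMap.congr_fun (hM j _ hj) x

lemma auxC1_pi {ι : Type} (M : ι → Type) [∀ j, AddCommGroup (M j)] [∀ j, Module R (M j)]
    (hM : ∀ j, AuxC1 d10 d21 (M j)) : AuxC1 d10 d21 (∀ j, M j) := by
  intro g hg
  have hj : ∀ j, ((LinearMap.proj j (R := R) (φ := M)).comp g).comp d21 = 0 := by
    intro j
    rw [LinearMap.comp_assoc, hg, LinearMap.comp_zero]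
  choose h hh using fun j => hM j _ (hj j)
  refine ⟨LinearMap.pi h, ?_⟩
  refine LinearMap.ext fun x => funext fun j => ?_
  simpa using LinearMap.congr_fun (hh j) x

end Elementary

/-- `Ext^n_R(M, N)` for `R`-modules `M`, `N`. -/
noncomputable def extGroup (R : Type) [CommRing R] (M N : Type) [AddCommGroup M] [Module R M]
    [AddCommGroup N] [Module R N] (n : ℕ) : Type :=
  ((Ext R (ModuleCat R) n).obj (Opposite.op (ModuleCat.of R M))).obj (ModuleCat.of R N)

/-- An `R`-module `C` is an S-contramodule if `Hom_R(S⁻¹R, C) = 0 = Ext^1_R(S⁻¹R, C)`. -/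
def IsSContramodule (R : Type) [CommRing R] (S : Submonoid R)
    (C : Type) [AddCommGroup C] [Module R C] : Prop :=
  (∀ f : Localization S →ₗ[R] C, f = 0) ∧
    Subsingleton (extGroup R (Localization S) C 1)

section Bridge

open CategoryTheory.Limits

variable {R : Type} [CommRing R] {L : Type} [AddCommGroup L] [Module R L]
variable (P : ProjectiveResolution (ModuleCat.of R L))

lemma moduleCat_isZero_iff (M : ModuleCat R) : IsZero M ↔ Subsingleton M := by
  constructor
  · intro h
    have h1 : (𝟙 M : M ⟶ M) = 0 := h.eq_of_src _ _
    have hz : ∀ a : M, a = 0 := by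
      intro a
      have := congrArg (fun φ : M ⟶ M => φ a) h1
      simpa using this
    exact ⟨fun a b => (hz a).trans (hz b).symm⟩
  · intro h
    exact ModuleCat.isZero_of_subsingleton M

lemma linearYonedaObj_d_apply (N : ModuleCat R) (n m : ℕ) (g : P.complex.X n ⟶ N) :
    ((P.complex.linearYonedaObj R N).d n m) g = P.complex.d m n ≫ g := by
  simp [ChainComplex.linearYonedaObj]
  rfl

lemma ext1_iff (N : Type) [AddCommGroup N] [Module R N] :
    Subsingleton (((Ext R (ModuleCat R) 1).obj (Opposite.op (ModuleCat.of R L))).obj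
      (ModuleCat.of R N)) ↔
      AuxC1 (P.complex.d 1 0).hom
        (P.complex.d 2 1).hom N := by
  set K := P.complex.linearYonedaObj R (ModuleCat.of R N) with hK
  have e : (((Ext R (ModuleCat R) 1).obj (Opposite.op (ModuleCat.of R L))).obj
      (ModuleCat.of R N)) ≅ K.homology 1 := P.isoExt 1 (ModuleCat.of R N)
  rw [Equiv.subsingleton_congr e.toLinearEquiv.toEquiv]
  rw [← moduleCat_isZero_iff, ← HomologicalComplex.exactAt_iff_isZero_homology]
  rw [HomologicalComplex.exactAt_iff' K 0 1 2
    ((ComplexShape.up ℕ).prev_eq' (by simp)) ((ComplexShape.up ℕ).next_eq' (by simp))]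
  rw [ShortComplex.moduleCat_exact_iff]
  constructor
  · intro hEx g hg
    have hg2 : (K.d 1 2) (ModuleCat.ofHom g : P.complex.X 1 ⟶ ModuleCat.of R N) = 0 := by
      rw [linearYonedaObj_d_apply]
      exact ModuleCat.hom_ext hg
    obtain ⟨h, hh⟩ := hEx _ hg2
    refine ⟨h.hom, ?_⟩
    have hh' : P.complex.d 1 0 ≫ (show P.complex.X 0 ⟶ ModuleCat.of R N from h) =
        (ModuleCat.ofHom g : P.complex.X 1 ⟶ ModuleCat.of R N) := hh
    exact congrArg ModuleCat.Hom.hom hh'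
  · intro hC g hg
    change P.complex.X 1 ⟶ ModuleCat.of R N at g
    have hg2 : g.hom.comp (P.complex.d 2 1).hom = 0 := by
      have hg' : (K.d 1 2) g = 0 := hg
      rw [linearYonedaObj_d_apply] at hg'
      exact congrArg ModuleCat.Hom.hom hg'
    obtain ⟨h, hh⟩ := hC g.hom hg2
    refine ⟨(ModuleCat.ofHom h : P.complex.X 0 ⟶ ModuleCat.of R N), ?_⟩
    show (K.d 0 1) (ModuleCat.ofHom h : P.complex.X 0 ⟶ ModuleCat.of R N) = g
    rw [linearYonedaObj_d_apply]
    exact ModuleCat.hom_ext hh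

lemma hom0_iff (N : Type) [AddCommGroup N] [Module R N] :
    (∀ f : L →ₗ[R] N, f = 0) ↔
      AuxC0 (P.complex.d 1 0).hom N := by
  constructor
  · intro h0 f hf
    have hf' : P.complex.d 1 0 ≫ (show P.complex.X 0 ⟶ ModuleCat.of R N from ModuleCat.ofHom f) = 0 :=
      ModuleCat.hom_ext hf
    let k := P.exact₀.desc (show P.complex.X 0 ⟶ ModuleCat.of R N from ModuleCat.ofHom f) hf'
    have hk : P.π.f 0 ≫ k = ModuleCat.ofHom f := P.exact₀.g_desc _ hf'
    have hk0 : (show L →ₗ[R] N from k.hom) = 0 := h0 _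
    rw [show f = (P.π.f 0 ≫ k).hom by rw [hk]; rfl]
    ext x
    show k ((P.π.f 0) x) = 0
    have := LinearMap.congr_fun hk0 ((P.π.f 0) x)
    exact this
  · intro hC f
    have hd : (P.complex.d 1 0 ≫ P.π.f 0 ≫
        (ModuleCat.ofHom f : ModuleCat.of R L ⟶ ModuleCat.of R N)) = 0 := by
      erw [← Category.assoc, P.complex_d_comp_π_f_zero]
      exact Limits.zero_comp
    have h0 := hC (P.π.f 0 ≫ (ModuleCat.ofHom f : ModuleCat.of R L ⟶ ModuleCat.of R N)).hom
      (congrArg ModuleCat.Hom.hom hd)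
    have hsurj : Function.Surjective (P.π.f 0) := by
      rw [← ModuleCat.epi_iff_surjective]
      infer_instance
    ext x
    obtain ⟨y, hy⟩ := hsurj x
    have := LinearMap.congr_fun h0 y
    simp only [LinearMap.zero_apply] at this
    rw [← hy]
    exact this

end Bridge

/-- The class of S-contramodule R-modules is closed under kernels, extensions, and
arbitrary products. -/
theorem contramodules_closed_under_kernels_extensions_products
    (R : Type) [CommRing R] (S : Submonoid R) :
    -- kernels
    (∀ (C D : Type) [AddCommGroup C] [Module R C] [AddCommGroup D] [Module R D],
      IsSContramodule R S C → IsSContramodule R S D →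
      ∀ f : C →ₗ[R] D, IsSContramodule R S (LinearMap.ker f)) ∧
    -- extensions
    (∀ (C' C C'' : Type) [AddCommGroup C'] [Module R C'] [AddCommGroup C] [Module R C]
        [AddCommGroup C''] [Module R C'']
        (i : C' →ₗ[R] C) (p : C →ₗ[R] C''),
      Function.Injective i → Function.Surjective p →
      LinearMap.range i = LinearMap.ker p →
      IsSContramodule R S C' → IsSContramodule R S C'' → IsSContramodule R S C) ∧
    -- arbitrary products
    (∀ (ι : Type) (M : ι → Type) [∀ i, AddCommGroup (M i)] [∀ i, Module R (M i)],
      (∀ i, IsSContramodule R S (M i)) → IsSContramodule R S (∀ i, M i)) := by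
  obtain ⟨P⟩ : Nonempty (ProjectiveResolution (ModuleCat.of R (Localization S))) :=
    HasProjectiveResolution.out
  have hproj : Module.Projective R ↑(P.complex.X 0) := by
    rw [IsProjective.iff_projective]
    convert P.projective 0
  have hd : (P.complex.d 1 0).hom.comp
      (P.complex.d 2 1).hom = 0 := by
    have := P.complex.d_comp_d 2 1 0
    exact congrArg ModuleCat.Hom.hom this
  have key : ∀ (N : Type) [AddCommGroup N] [Module R N],
      IsSContramodule R S N ↔
        (AuxC0 (P.complex.d 1 0).hom N ∧
          AuxC1 (P.complex.d 1 0).hom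
            (P.complex.d 2 1).hom N) := by
    intro N _ _
    unfold IsSContramodule
    rw [hom0_iff P N]
    have : Subsingleton (extGroup R (Localization S) N 1) ↔
        Subsingleton (((Ext R (ModuleCat R) 1).obj
          (Opposite.op (ModuleCat.of R (Localization S)))).obj (ModuleCat.of R N)) := Iff.rfl
    rw [this, ext1_iff P N]
  refine ⟨?_, ?_, ?_⟩
  · intro C D _ _ _ _ hC hD f
    rw [key] at hC hD ⊢
    exact ⟨auxC0_ker hC.1 f, auxC1_ker hC.2 hD.1 f⟩
  · intro C' C C'' _ _ _ _ _ _ i p hi hp hrange hC' hC''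
    rw [key] at hC' hC'' ⊢
    exact ⟨auxC0_ext i p hi hrange hC'.1 hC''.1,
      auxC1_ext i p hi hp hrange hd hproj hC'.2 hC''.2⟩
  · intro ι M _ _ hM
    rw [key]
    simp only [key] at hM
    exact ⟨auxC0_pi M fun j => (hM j).1, auxC1_pi M fun j => (hM j).2⟩
end

section
/- Let b : A → B and c : A → C be R-module homomorphisms such that C is an S-contramodule, ker(b) is an S-h-divisible R-module, and coker(b) is a module over S⁻¹R. Then there exists a unique homomorphism f : B → C with c = f ∘ b. -/
open CategoryTheory

/-- An `R`-module `C` is S-h-divisible if it is a quotient of a module over `S⁻¹R`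
(equivalently, of a free `S⁻¹R`-module). -/
def IsSHDivisible (R : Type) [CommRing R] (S : Submonoid R)
    (C : Type) [AddCommGroup C] [Module R C] : Prop :=
  ∃ (ι : Type) (f : (ι →₀ Localization S) →ₗ[R] C), Function.Surjective f

section Aux

variable {R : Type} [CommRing R] {S : Submonoid R}

/-- every `s ∈ S` acts bijectively -/
def SInv (S : Submonoid R) (M : Type) [AddCommGroup M] [Module R M] : Prop :=
  ∀ s : S, Function.Bijective (fun x : M => (s : R) • x)

variable {M N P : Type} [AddCommGroup M] [Module R M] [AddCommGroup N] [Module R N]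
  [AddCommGroup P] [Module R P]

lemma factor_thru (f : M →ₗ[R] N) (g : M →ₗ[R] P)
    (hf : Function.Surjective f) (h0 : ∀ x, f x = 0 → g x = 0) :
    ∃ h : N →ₗ[R] P, h ∘ₗ f = g := by
  have key : ∀ x y, f x = f y → g x = g y := by
    intro x y hxy
    have := h0 (x - y) (by simp [hxy])
    simpa [sub_eq_zero] using this
  choose sec hsec using hf
  refine ⟨{ toFun := fun n => g (sec n), map_add' := ?_, map_smul' := ?_ }, ?_⟩
  · intro n m
    rw [← g.map_add]
    exact key _ _ (by simp [hsec])
  · intro r n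
    rw [← g.map_smul]
    exact key _ _ (by simp [hsec])
  · ext x
    exact key _ _ (hsec (f x))

lemma lift_of_injective (ι : P →ₗ[R] N) (hι : Function.Injective ι)
    (f : M →ₗ[R] N) (hr : ∀ x, ∃ y, ι y = f x) :
    ∃ g : M →ₗ[R] P, ι ∘ₗ g = f := by
  choose g hg using hr
  refine ⟨{ toFun := g, map_add' := ?_, map_smul' := ?_ }, ?_⟩
  · intro x y
    apply hι
    rw [map_add, hg, hg, hg, map_add]
  · intro r x
    apply hι
    rw [map_smul, hg, hg, map_smul]
    simp
  · ext x
    simpa using hg x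

lemma isUnit_end (h : SInv S M) (s : S) :
    IsUnit (algebraMap R (Module.End R M) s) := by
  rw [Module.End.isUnit_iff]
  exact h s

/-- A linear map `Localization S →ₗ[R] M` sending `1` to a given element, when `S` acts
invertibly on `M`. -/
noncomputable def toLoc (h : SInv S M) (q₀ : M) : Localization S →ₗ[R] M :=
  IsLocalizedModule.lift S (Algebra.linearMap R (Localization S))
    (LinearMap.toSpanSingleton R M q₀) (isUnit_end h)

lemma toLoc_one (h : SInv S M) (q₀ : M) : toLoc h q₀ 1 = q₀ := by
  have h1 : (1 : Localization S) = Algebra.linearMap R (Localization S) 1 := by simp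
  rw [toLoc, h1, IsLocalizedModule.lift_apply]
  simp

variable {C : Type} [AddCommGroup C] [Module R C]

lemma hom_eq_zero_of_sinv (hC1 : ∀ f : Localization S →ₗ[R] C, f = 0)
    (h : SInv S M) (φ : M →ₗ[R] C) : φ = 0 := by
  ext q₀
  have h0 := hC1 (φ ∘ₗ toLoc h q₀)
  have := LinearMap.congr_fun h0 1
  simpa [toLoc_one h q₀] using this

lemma sinv_loc : SInv S (Localization S) := by
  intro s
  obtain ⟨u, hu⟩ := IsLocalization.map_units (Localization S) s
  rw [Function.bijective_iff_has_inverse]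
  refine ⟨fun x => (↑u⁻¹ : Localization S) * x, fun x => ?_, fun x => ?_⟩ <;>
    simp [Algebra.smul_def, ← hu, ← mul_assoc]

lemma sinv_finsupp {ι : Type} (h : SInv S M) : SInv S (ι →₀ M) := by
  intro s
  constructor
  · intro f g hfg
    ext i
    have h1 : (s : R) • f = (s : R) • g := hfg
    have h2 := congrArg (fun t : ι →₀ M => t i) h1
    simp only [Finsupp.smul_apply] at h2
    exact (h s).1 h2
  · intro f
    let e : M ≃ M := Equiv.ofBijective _ (h s)
    have he : ∀ x : M, e x = (s : R) • x := fun _ => rfl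
    have he0 : e.symm 0 = 0 := by
      apply e.injective
      rw [Equiv.apply_symm_apply, he, smul_zero]
    refine ⟨f.mapRange e.symm he0, ?_⟩
    ext i
    rw [Finsupp.smul_apply, Finsupp.mapRange_apply, ← he, Equiv.apply_symm_apply]

lemma sinv_ker (f : M →ₗ[R] N) (hM : SInv S M)
    (hN : ∀ s : S, Function.Injective fun x : N => (s : R) • x) :
    SInv S (LinearMap.ker f) := by
  intro s
  constructor
  · intro x y hxy
    apply Subtype.ext
    exact (hM s).1 (by simpa [Subtype.ext_iff] using hxy)
  · rintro ⟨k, hk⟩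
    obtain ⟨y, hy⟩ := (hM s).2 k
    have hy' : (s : R) • y = k := hy
    have hfy : f y = 0 := by
      apply hN s
      show (s : R) • f y = (s : R) • (0 : N)
      rw [← map_smul, hy', LinearMap.mem_ker.1 hk, smul_zero]
    exact ⟨⟨y, LinearMap.mem_ker.2 hfy⟩, Subtype.ext hy'⟩

end Aux

section ExtProperty

variable {R : Type} [CommRing R]

lemma ext_property {M : Type} [AddCommGroup M] [Module R M] {C : Type} [AddCommGroup C]
    [Module R C] (hsub : Subsingleton (extGroup R M C 1)) :
    ∃ (F₀ F₁ : Type) (_ : AddCommGroup F₀) (_ : Module R F₀) (_ : AddCommGroup F₁)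
      (_ : Module R F₁) (π₀ : F₀ →ₗ[R] M) (d : F₁ →ₗ[R] F₀),
      Function.Surjective π₀ ∧
      (∀ (E X : Type) (_ : AddCommGroup E) (_ : Module R E) (_ : AddCommGroup X) (_ : Module R X)
        (ρ : E →ₗ[R] X) (_ : Function.Surjective ρ) (g : F₀ →ₗ[R] X),
          ∃ l : F₀ →ₗ[R] E, ρ ∘ₗ l = g) ∧
      (∀ x, π₀ x = 0 → ∃ y, d y = x) ∧
      (∀ y, π₀ (d y) = 0) ∧
      (∀ φ : F₁ →ₗ[R] C, (∀ y, d y = 0 → φ y = 0) → ∃ ψ : F₀ →ₗ[R] C, ψ ∘ₗ d = φ) := by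
  classical
  set Mc := ModuleCat.of R M with hMc
  let P : ProjectiveResolution Mc := HasProjectiveResolution.out.some
  set Cc := ModuleCat.of R C with hCc
  let i0 : ((ChainComplex.single₀ (ModuleCat R)).obj Mc).X 0 ≅ Mc :=
    HomologicalComplex.singleObjXSelf (ComplexShape.down ℕ) 0 Mc
  let π₀ : P.complex.X 0 ⟶ Mc := P.π.f 0 ≫ i0.hom
  let d10 : P.complex.X 1 ⟶ P.complex.X 0 := P.complex.d 1 0
  let d21 : P.complex.X 2 ⟶ P.complex.X 1 := P.complex.d 2 1
  refine ⟨↥(P.complex.X 0), ↥(P.complex.X 1), inferInstance, inferInstance, inferInstance,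
    inferInstance, (π₀.hom : _ →ₗ[R] _), (d10.hom : _ →ₗ[R] _), ?_, ?_, ?_, ?_, ?_⟩
  · -- surjectivity of π₀
    have h1 : Function.Surjective (P.π.f 0) := by
      rw [← ModuleCat.epi_iff_surjective]
      infer_instance
    have h2 : Function.Surjective i0.hom :=
      (ConcreteCategory.bijective_of_isIso i0.hom).2
    exact h2.comp h1
  · -- projectivity lifting
    intro E X _ _ _ _ ρ hρ g
    let gc : P.complex.X 0 ⟶ ModuleCat.of R X := ModuleCat.ofHom g
    let rc : ModuleCat.of R E ⟶ ModuleCat.of R X := ModuleCat.ofHom ρ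
    haveI : Epi rc := (ModuleCat.epi_iff_surjective rc).2 hρ
    exact ⟨(Projective.factorThru gc rc).hom,
      by have := congrArg ModuleCat.Hom.hom (Projective.factorThru_comp gc rc); exact this⟩
  · -- exactness at 0
    intro x hx
    have hex := P.exact₀
    rw [ShortComplex.moduleCat_exact_iff] at hex
    have hx' : (P.π.f 0) x = 0 := by
      have : i0.hom ((P.π.f 0) x) = 0 := hx
      have hinj := (ConcreteCategory.bijective_of_isIso i0.hom).1
      apply hinj
      exact this.trans (map_zero _).symm
    exact hex x hx'
  · -- complex property
    intro y
    show π₀ (d10 y) = 0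
    have : (d10 ≫ π₀) y = π₀ (d10 y) := rfl
    rw [← this]
    have hz : d10 ≫ π₀ = 0 := by
      simp only [π₀, d10, ← Category.assoc, P.complex_d_comp_π_f_zero, Limits.zero_comp]
    rw [hz]
    rfl
  · -- Ext part
    intro φ hφ
    let K := P.complex.linearYonedaObj R Cc
    have e := P.isoExt (R := R) 1 Cc
    haveI hsub' :
        Subsingleton ↑(((Ext R (ModuleCat R) 1).obj (Opposite.op Mc)).obj Cc) := hsub
    have hsub2 : Subsingleton ↥(K.homology 1) := by
      constructor
      intro a b
      have h1 : e.inv a = e.inv b := Subsingleton.elim _ _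
      have h2 : ∀ z : ↥(K.homology 1), e.hom (e.inv z) = z := by
        intro z
        have := e.inv_hom_id
        calc e.hom (e.inv z) = (e.inv ≫ e.hom) z := rfl
          _ = z := by rw [this]; rfl
      rw [← h2 a, ← h2 b, h1]
    have hz : Limits.IsZero (K.homology 1) := ModuleCat.isZero_of_subsingleton _
    have hexact : K.ExactAt 1 := (K.exactAt_iff_isZero_homology 1).2 hz
    rw [K.exactAt_iff' 0 1 2 (by simp) (by simp)] at hexact
    rw [ShortComplex.moduleCat_exact_iff] at hexact
    have hd12 : ∀ (ψ : P.complex.X 1 ⟶ Cc), K.d 1 2 ψ = d21 ≫ ψ := by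
      intro ψ
      simp [K, ChainComplex.linearYonedaObj_d, d21]
      rfl
    have hd01 : ∀ (ψ : P.complex.X 0 ⟶ Cc), K.d 0 1 ψ = d10 ≫ ψ := by
      intro ψ
      simp [K, ChainComplex.linearYonedaObj_d, d10]
      rfl
    have hφ2 : K.d 1 2 (ModuleCat.ofHom φ : P.complex.X 1 ⟶ Cc) = 0 := by
      rw [hd12]
      apply ModuleCat.hom_ext
      apply LinearMap.ext
      intro z
      show φ (d21 z) = 0
      apply hφ
      show (d21 ≫ d10) z = 0
      have : d21 ≫ d10 = 0 := P.complex.d_comp_d 2 1 0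
      rw [this]
      rfl
    obtain ⟨ψ, hψ⟩ := hexact (ModuleCat.ofHom φ : P.complex.X 1 ⟶ Cc) hφ2
    have hψ0 : K.d 0 1 ψ = ModuleCat.ofHom φ := hψ
    replace hψ0 : d10 ≫ (ψ : P.complex.X 0 ⟶ Cc) = ModuleCat.ofHom φ := (hd01 ψ).symm.trans hψ0
    exact ⟨ModuleCat.Hom.hom (ψ : P.complex.X 0 ⟶ Cc), by have := congrArg ModuleCat.Hom.hom hψ0; exact this⟩

end ExtProperty
section Lifting

variable {R : Type} [CommRing R] {S : Submonoid R} {C : Type} [AddCommGroup C] [Module R C]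

lemma loc_lift (hC1 : ∀ f : Localization S →ₗ[R] C, f = 0)
    (hC2 : Subsingleton (extGroup R (Localization S) C 1))
    {E X : Type} [AddCommGroup E] [Module R E] [AddCommGroup X] [Module R X]
    (ρ : E →ₗ[R] X) (κ : C →ₗ[R] E)
    (hρ : Function.Surjective ρ) (hκ : Function.Injective κ)
    (hex : ∀ z, ρ z = 0 → ∃ y, κ y = z) (hcomp : ∀ y, ρ (κ y) = 0)
    (γ : Localization S →ₗ[R] X) :
    ∃ δ : Localization S →ₗ[R] E, ρ ∘ₗ δ = γ := by
  obtain ⟨F₀, F₁, i1, i2, i3, i4, π₀, d, hπs, hproj, hex0, hcπ, hextend⟩ := ext_property hC2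
  obtain ⟨lam, hlam⟩ := hproj E X inferInstance inferInstance inferInstance inferInstance
    ρ hρ (γ ∘ₗ π₀)
  have hmem : ∀ y : F₁, ∃ z, κ z = (lam ∘ₗ d) y := by
    intro y
    apply hex
    have h1 : ρ (lam (d y)) = γ (π₀ (d y)) := LinearMap.congr_fun hlam (d y)
    show ρ (lam (d y)) = 0
    rw [h1, hcπ y, map_zero]
  obtain ⟨φ, hφ⟩ := lift_of_injective κ hκ (lam ∘ₗ d) hmem
  have hker : ∀ y, d y = 0 → φ y = 0 := by
    intro y hy
    apply hκ
    have h1 : κ (φ y) = lam (d y) := LinearMap.congr_fun hφ y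
    rw [map_zero, h1, hy, map_zero]
  obtain ⟨ψ, hψ⟩ := hextend φ hker
  have hμ : ∀ x, π₀ x = 0 → (lam - κ ∘ₗ ψ) x = 0 := by
    intro x hx
    obtain ⟨y, hy⟩ := hex0 x hx
    show lam x - κ (ψ x) = 0
    rw [← hy]
    have h1 : ψ (d y) = φ y := LinearMap.congr_fun hψ y
    have h2 : κ (φ y) = lam (d y) := LinearMap.congr_fun hφ y
    rw [h1, h2, sub_self]
  obtain ⟨δ, hδ⟩ := factor_thru π₀ (lam - κ ∘ₗ ψ) hπs hμ
  refine ⟨δ, LinearMap.ext fun x => ?_⟩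
  obtain ⟨w, hw⟩ := hπs x
  have h3 : δ (π₀ w) = (lam - κ ∘ₗ ψ) w := LinearMap.congr_fun hδ w
  show ρ (δ x) = γ x
  rw [← hw, h3]
  show ρ (lam w - κ (ψ w)) = γ (π₀ w)
  rw [map_sub, hcomp, sub_zero]
  exact LinearMap.congr_fun hlam w

set_option maxHeartbeats 2000000 in
lemma exists_section (hC1 : ∀ f : Localization S →ₗ[R] C, f = 0)
    (hC2 : Subsingleton (extGroup R (Localization S) C 1))
    {E Q : Type} [AddCommGroup E] [Module R E] [AddCommGroup Q] [Module R Q]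
    (p : E →ₗ[R] Q) (ι : C →ₗ[R] E) (hp : Function.Surjective p) (hι : Function.Injective ι)
    (hcomp : ∀ y, p (ι y) = 0) (hex : ∀ z, p z = 0 → ∃ y, ι y = z)
    (hQ : SInv S Q) :
    ∃ sb : Q →ₗ[R] E, p ∘ₗ sb = LinearMap.id := by
  classical
  -- the free module F' over the localization, mapping onto Q
  set F' := (Q →₀ Localization S) with hF'
  obtain ⟨q, hq⟩ : ∃ q : F' →ₗ[R] Q, Function.Surjective q := by
    refine ⟨Finsupp.lsum ℕ fun q₀ => toLoc hQ q₀, fun q₀ => ⟨Finsupp.single q₀ 1, ?_⟩⟩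
    show (Finsupp.lsum ℕ fun q₀ => toLoc hQ q₀) (Finsupp.single q₀ 1) = q₀
    rw [Finsupp.lsum_single]
    exact toLoc_one hQ q₀
  obtain ⟨τ, hpτc⟩ : ∃ τ : F' →ₗ[R] E, p ∘ₗ τ = q := by
    -- the pullback E' ⊆ F' × E
    let T : (F' × E) →ₗ[R] Q := q ∘ₗ LinearMap.fst R F' E - p ∘ₗ LinearMap.snd R F' E
    let E' := LinearMap.ker T
    let ρ : E' →ₗ[R] F' := LinearMap.fst R F' E ∘ₗ E'.subtype
    have hκm : ∀ y : C, (LinearMap.prod (0 : C →ₗ[R] F') ι) y ∈ E' := by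
      intro y
      show q ((0 : C →ₗ[R] F') y) - p (ι y) = 0
      rw [LinearMap.zero_apply, map_zero, hcomp, sub_zero]
    let κ : C →ₗ[R] E' := LinearMap.codRestrict E' (LinearMap.prod 0 ι) hκm
    have hρs : Function.Surjective ρ := by
      intro x
      obtain ⟨z, hz⟩ := hp (q x)
      refine ⟨⟨(x, z), ?_⟩, rfl⟩
      show q x - p z = 0
      rw [hz, sub_self]
    have hκi : Function.Injective κ := by
      intro y₁ y₂ h
      apply hι
      have := congrArg (fun w : E' => (w : F' × E).2) h
      exact this
    have hexκ : ∀ z : E', ρ z = 0 → ∃ y, κ y = z := by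
      rintro ⟨⟨x, z⟩, hw⟩ hz
      have hx0 : x = 0 := hz
      have hpz : p z = 0 := by
        have h1 : q x - p z = 0 := hw
        rw [hx0, map_zero, zero_sub, neg_eq_zero] at h1
        exact h1
      obtain ⟨y, hy⟩ := hex z hpz
      refine ⟨y, Subtype.ext (Prod.ext ?_ ?_)⟩
      · show (0 : F') = x
        rw [hx0]
      · exact hy
    have hcompκ : ∀ y, ρ (κ y) = 0 := fun y => rfl
    -- lift each generator
    have hlift : ∀ q₀ : Q, ∃ δ : Localization S →ₗ[R] E',
        ρ ∘ₗ δ = Finsupp.lsingle q₀ := fun q₀ =>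
      loc_lift (E := ↥E') (X := F') hC1 hC2 ρ κ hρs hκi hexκ hcompκ (Finsupp.lsingle q₀)
    choose δ hδ using hlift
    let σ : F' →ₗ[R] E' := Finsupp.lsum ℕ δ
    have hρσ : ρ ∘ₗ σ = LinearMap.id := by
      apply Finsupp.lhom_ext'
      intro a
      rw [LinearMap.comp_assoc]
      show ρ ∘ₗ (σ ∘ₗ Finsupp.lsingle a) = LinearMap.id ∘ₗ Finsupp.lsingle a
      have h1 : σ ∘ₗ Finsupp.lsingle a = δ a := Finsupp.lsum_comp_lsingle _ _ _
      rw [h1, hδ a, LinearMap.id_comp]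
    refine ⟨LinearMap.snd R F' E ∘ₗ E'.subtype ∘ₗ σ, LinearMap.ext fun x => ?_⟩
    have hmem : (σ x : F' × E) ∈ E' := (σ x).2
    have h1 : q ((σ x : F' × E).1) - p ((σ x : F' × E).2) = 0 := hmem
    have h2 : (σ x : F' × E).1 = x := LinearMap.congr_fun hρσ x
    rw [h2] at h1
    show p ((σ x : F' × E).2) = q x
    exact (sub_eq_zero.mp h1).symm
  have hpτ : ∀ x, p (τ x) = q x := fun x => LinearMap.congr_fun hpτc x
  have hK : SInv S (LinearMap.ker q) := by
    apply sinv_ker q (sinv_finsupp sinv_loc)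
    intro s
    exact (hQ s).1
  have hmemτ : ∀ k : LinearMap.ker q, ∃ y, ι y = (τ ∘ₗ (LinearMap.ker q).subtype) k := by
    intro k
    apply hex
    show p (τ (k : F')) = 0
    rw [hpτ, LinearMap.mem_ker.1 k.2]
  obtain ⟨ν, hν⟩ := lift_of_injective (M := ↥(LinearMap.ker q)) ι hι ((τ ∘ₗ (LinearMap.ker q).subtype : ↥(LinearMap.ker q) →ₗ[R] E)) hmemτ
  have hν0 : ν = 0 := hom_eq_zero_of_sinv hC1 hK ν
  have hτ0 : ∀ x, q x = 0 → τ x = 0 := by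
    intro x hx
    have h1 : ι (ν ⟨x, LinearMap.mem_ker.2 hx⟩) = τ x := LinearMap.congr_fun hν _
    rw [hν0] at h1
    simpa using h1.symm
  obtain ⟨sb, hsb⟩ := factor_thru q τ hq hτ0
  refine ⟨sb, LinearMap.ext fun z => ?_⟩
  obtain ⟨x, hx⟩ := hq z
  show p (sb z) = z
  rw [← hx]
  have h1 : sb (q x) = τ x := LinearMap.congr_fun hsb x
  rw [h1, hpτ]

end Lifting
/-- If `b : A → B`, `c : A → C` with `C` an S-contramodule, `ker b` S-h-divisible, and
`coker b` a module over `S⁻¹R` (every `s ∈ S` acts bijectively on it), then there is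
a unique `f : B → C` with `c = f ∘ b`. -/
theorem unique_factorization_through_contramodule
    (R : Type) [CommRing R] (S : Submonoid R)
    (A B C : Type) [AddCommGroup A] [Module R A] [AddCommGroup B] [Module R B]
    [AddCommGroup C] [Module R C]
    (b : A →ₗ[R] B) (c : A →ₗ[R] C)
    (hC : IsSContramodule R S C)
    (hker : IsSHDivisible R S (LinearMap.ker b))
    (hcoker : ∀ s : S, Function.Bijective
      (fun x : B ⧸ LinearMap.range b => (s : R) • x)) :
    ∃! f : B →ₗ[R] C, c = f.comp b := by
  classical
  obtain ⟨hC1, hC2⟩ := hC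
  -- Step 0: c vanishes on the kernel of b
  have step0 : ∀ a : A, b a = 0 → c a = 0 := by
    obtain ⟨ι₀, g, hg⟩ := hker
    have hzero : c ∘ₗ (LinearMap.ker b).subtype ∘ₗ g = 0 := by
      apply Finsupp.lhom_ext'
      intro i
      rw [LinearMap.zero_comp]
      exact hC1 _
    intro a ha
    obtain ⟨w, hw⟩ := hg ⟨a, LinearMap.mem_ker.2 ha⟩
    have h1 : c ((LinearMap.ker b).subtype (g w)) = 0 := LinearMap.congr_fun hzero w
    rw [hw] at h1
    exact h1
  set N := LinearMap.range b with hN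
  set W := LinearMap.range (LinearMap.prod b (-c)) with hW
  let mk : (B × C) →ₗ[R] ((B × C) ⧸ W) := W.mkQ
  let ι : C →ₗ[R] ((B × C) ⧸ W) := mk ∘ₗ LinearMap.inr R B C
  let jB : B →ₗ[R] ((B × C) ⧸ W) := mk ∘ₗ LinearMap.inl R B C
  have hWle : W ≤ LinearMap.ker (N.mkQ ∘ₗ LinearMap.fst R B C) := by
    rintro ⟨x, y⟩ ⟨a, ha⟩
    have hx : b a = x := congrArg Prod.fst ha
    rw [LinearMap.mem_ker]
    show N.mkQ x = 0
    rw [Submodule.mkQ_apply, Submodule.Quotient.mk_eq_zero]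
    exact ⟨a, hx⟩
  let p : ((B × C) ⧸ W) →ₗ[R] (B ⧸ N) := W.liftQ (N.mkQ ∘ₗ LinearMap.fst R B C) hWle
  have hpmk : ∀ w : B × C, p (mk w) = N.mkQ w.1 := by
    intro w
    show p (W.mkQ w) = N.mkQ w.1
    rw [Submodule.mkQ_apply, Submodule.liftQ_apply]
    rfl
  have hp : Function.Surjective p := by
    intro z
    obtain ⟨x, hx⟩ := N.mkQ_surjective z
    exact ⟨mk (x, 0), by rw [hpmk]; exact hx⟩
  have hι : Function.Injective ι := by
    intro y₁ y₂ h
    have h0 : ι (y₁ - y₂) = 0 := by rw [map_sub, h, sub_self]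
    have hmem : ((0 : B), y₁ - y₂) ∈ W := by
      rw [← Submodule.Quotient.mk_eq_zero W]
      exact h0
    obtain ⟨a, ha⟩ := hmem
    have hb : b a = 0 := congrArg Prod.fst ha
    have hc : -(c a) = y₁ - y₂ := congrArg Prod.snd ha
    rw [step0 a hb, neg_zero] at hc
    exact sub_eq_zero.mp hc.symm
  have hcompι : ∀ y, p (ι y) = 0 := by
    intro y
    show p (mk (0, y)) = 0
    rw [hpmk, map_zero]
  have hexι : ∀ z, p z = 0 → ∃ y, ι y = z := by
    intro z hz
    obtain ⟨⟨x, y⟩, hxy⟩ := W.mkQ_surjective z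
    have hx : N.mkQ x = 0 := by
      rw [← hxy] at hz
      rw [← hpmk (x, y)]
      exact hz
    rw [Submodule.mkQ_apply, Submodule.Quotient.mk_eq_zero] at hx
    obtain ⟨a, ha⟩ := hx
    refine ⟨y + c a, ?_⟩
    rw [← hxy]
    show mk (0, y + c a) = mk (x, y)
    rw [show mk = W.mkQ from rfl, Submodule.mkQ_apply, Submodule.mkQ_apply,
      Submodule.Quotient.eq]
    refine ⟨-a, ?_⟩
    have : LinearMap.prod b (-c) (-a) = (-(b a), c a) := by
      simp
    rw [this, ha, Prod.mk_sub_mk]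
    simp
  have hQ : SInv S (B ⧸ N) := hcoker
  obtain ⟨sb, hsb⟩ := exists_section hC1 hC2 p ι hp hι hcompι hexι hQ
  have hre : ∀ z, ∃ y, ι y = z - sb (p z) := by
    intro z
    apply hexι
    rw [map_sub]
    have h1 : p (sb (p z)) = p z := LinearMap.congr_fun hsb (p z)
    rw [h1, sub_self]
  obtain ⟨r, hr⟩ := lift_of_injective ι hι (LinearMap.id - sb ∘ₗ p) hre
  have hrι : ∀ y, r (ι y) = y := by
    intro y
    apply hι
    have h1 : ι (r (ι y)) = ι y - sb (p (ι y)) := LinearMap.congr_fun hr (ι y)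
    rw [hcompι, map_zero, sub_zero] at h1
    exact h1
  have hfb : ∀ a, (r ∘ₗ jB) (b a) = c a := by
    intro a
    have hjb : jB (b a) = ι (c a) := by
      show mk (b a, 0) = mk (0, c a)
      rw [show mk = W.mkQ from rfl, Submodule.mkQ_apply, Submodule.mkQ_apply,
        Submodule.Quotient.eq]
      refine ⟨a, ?_⟩
      have : LinearMap.prod b (-c) a = (b a, -(c a)) := rfl
      rw [this, Prod.mk_sub_mk]
      simp
    show r (jB (b a)) = c a
    rw [hjb, hrι]
  refine ⟨r ∘ₗ jB, ?_, ?_⟩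
  · exact (LinearMap.ext fun a => (hfb a).symm)
  · intro f' hf'
    have hdiff : ∀ x : B, N.mkQ x = 0 → (f' - r ∘ₗ jB) x = 0 := by
      intro x hx
      rw [Submodule.mkQ_apply, Submodule.Quotient.mk_eq_zero] at hx
      obtain ⟨a, ha⟩ := hx
      show f' x - (r ∘ₗ jB) x = 0
      rw [← ha]
      have h1 : f' (b a) = c a := (LinearMap.congr_fun hf' a).symm
      rw [h1, hfb, sub_self]
    obtain ⟨h, hh⟩ := factor_thru N.mkQ (f' - r ∘ₗ jB) N.mkQ_surjective hdiff
    have hz : h = 0 := hom_eq_zero_of_sinv hC1 hQ h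
    have h0 : f' - r ∘ₗ jB = 0 := by
      rw [← hh, hz, LinearMap.zero_comp]
    exact sub_eq_zero.mp h0
end

section
/- The R-module Hom_R(M, C) is an S-contramodule whenever either M is an S-torsion R-module or C is an S-contramodule R-module. -/
open CategoryTheory

section Loc
variable {R : Type} [CommRing R] {S : Submonoid R}

lemma loc_act (s : S) (n : Localization S) :
    (s : R) • (Localization.mk 1 s * n) = n := by
  rw [← smul_mul_assoc, Localization.smul_mk, smul_eq_mul, mul_one, Localization.mk_self, one_mul]

lemma loc_div (n : Localization S) (s : S) : ∃ n', (s : R) • n' = n :=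
  ⟨Localization.mk 1 s * n, loc_act s n⟩

lemma loc_inj (s : S) (n : Localization S) (h : (s : R) • n = 0) : n = 0 := by
  have := loc_act s n
  rw [← mul_smul_comm, h, mul_zero] at this
  exact this.symm
end Loc

section Abstract
variable {R : Type} [CommRing R] {S : Submonoid R}
variable {M C P1 P0 : Type}
  [AddCommGroup M] [Module R M] [AddCommGroup C] [Module R C]
  [AddCommGroup P1] [Module R P1] [AddCommGroup P0] [Module R P0]

lemma kill_right (u v : S) (z : M) (h : (v : R) • z = 0) : ((u * v : S) : R) • z = 0 := by
  rw [Submonoid.coe_mul, mul_smul, h, smul_zero]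

lemma kill_left (u v : S) (z : M) (h : (u : R) • z = 0) : ((u * v : S) : R) • z = 0 := by
  rw [mul_comm]; exact kill_right v u z h

lemma lift_of_torsion
    (htors : ∀ x : M, ∃ s : S, (s : R) • x = 0)
    (d : P1 →ₗ[R] P0) (π : P0 →ₗ[R] Localization S)
    (hπ : Function.Surjective π)
    (hk : LinearMap.ker π = LinearMap.range d)
    (f : P1 →ₗ[R] (M →ₗ[R] C))
    (hf : LinearMap.ker d ≤ LinearMap.ker f) :
    ∃ g : P0 →ₗ[R] (M →ₗ[R] C), g ∘ₗ d = f := by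
  have hrep : ∀ (p : P0) (s : S), ∃ (x : P1) (q : P0), d x = p - (s : R) • q := by
    intro p s
    obtain ⟨n', hn'⟩ := loc_div (π p) s
    obtain ⟨q, hq⟩ := hπ n'
    have hm : p - (s : R) • q ∈ LinearMap.ker π := by
      simp [LinearMap.mem_ker, map_sub, map_smul, hq, hn']
    rw [hk] at hm
    obtain ⟨x, hx⟩ := hm
    exact ⟨x, q, hx⟩
  have hdk : ∀ y : P1, π (d y) = 0 := by
    intro y
    have : d y ∈ LinearMap.range d := ⟨y, rfl⟩
    rw [← hk] at this
    exact this
  have hwd : ∀ (m : M) (s s' : S) (p : P0) (x x' : P1) (q q' : P0),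
      (s : R) • m = 0 → (s' : R) • m = 0 →
      d x = p - (s : R) • q → d x' = p - (s' : R) • q' →
      f x m = f x' m := by
    intro m s s' p x x' q q' hs hs' hx hx'
    obtain ⟨n'', hn''⟩ := loc_div (π p) (s * s')
    obtain ⟨q'', hq''⟩ := hπ n''
    have hπq : (s : R) • π q = π p := by
      have h := congrArg π hx
      rw [hdk, map_sub, map_smul] at h
      exact (sub_eq_zero.mp h.symm).symm
    have hπq' : (s' : R) • π q' = π p := by
      have h := congrArg π hx'
      rw [hdk, map_sub, map_smul] at h
      exact (sub_eq_zero.mp h.symm).symm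
    have hcoe : ((s : R) * (s' : R)) = ((s * s' : S) : R) := rfl
    have hA : π (q - (s' : R) • q'') = 0 := by
      apply loc_inj s
      rw [map_sub, map_smul, smul_sub, smul_smul, hπq, hq'', hcoe, hn'', sub_self]
    have hB : π (q' - (s : R) • q'') = 0 := by
      apply loc_inj s'
      rw [map_sub, map_smul, smul_sub, smul_smul, hπq', hq'', mul_comm, hcoe, hn'', sub_self]
    obtain ⟨a, ha⟩ : q - (s' : R) • q'' ∈ LinearMap.range d := by rw [← hk]; exact hA
    obtain ⟨b, hb⟩ : q' - (s : R) • q'' ∈ LinearMap.range d := by rw [← hk]; exact hB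
    have hker : x - x' - ((s' : R) • b - (s : R) • a) ∈ LinearMap.ker d := by
      rw [LinearMap.mem_ker]
      simp only [map_sub, map_smul]
      rw [ha, hb, hx, hx']
      module
    have e1 : f (x - x' - ((s' : R) • b - (s : R) • a)) m = 0 := by
      rw [hf hker]; rfl
    simp only [map_sub, map_smul, LinearMap.sub_apply, LinearMap.smul_apply] at e1
    have e3 : (s' : R) • f b m = 0 := by rw [← map_smul, hs', map_zero]
    have e4 : (s : R) • f a m = 0 := by rw [← map_smul, hs, map_zero]
    rw [e3, e4] at e1
    have : f x m - f x' m = 0 := by simpa using e1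
    exact sub_eq_zero.mp this
  have hex : ∀ (p : P0) (m : M), ∃ z : P1 × P0 × S,
      ((z.2.2 : R)) • m = 0 ∧ d z.1 = p - ((z.2.2 : R)) • z.2.1 := by
    intro p m
    obtain ⟨s, hs⟩ := htors m
    obtain ⟨x, q, hx⟩ := hrep p s
    exact ⟨⟨x, q, s⟩, hs, hx⟩
  classical
  set g0 : P0 → M → C := fun p m => f (hex p m).choose.1 m with hg0
  have val_eq : ∀ (p : P0) (m : M) (s : S) (x : P1) (q : P0),
      (s : R) • m = 0 → d x = p - (s : R) • q → g0 p m = f x m := by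
    intro p m s x q hs hx
    obtain ⟨hs', hx'⟩ := (hex p m).choose_spec
    exact hwd m _ s p _ x _ q hs' hs hx' hx
  have Hadd1 : ∀ (p p' : P0) (m : M), g0 (p + p') m = g0 p m + g0 p' m := by
    intro p p' m
    obtain ⟨s, hs⟩ := htors m
    obtain ⟨x, q, hx⟩ := hrep p s
    obtain ⟨x', q', hx'⟩ := hrep p' s
    have hxx : d (x + x') = (p + p') - (s : R) • (q + q') := by
      rw [map_add, hx, hx']; module
    rw [val_eq (p + p') m s (x + x') (q + q') hs hxx, val_eq p m s x q hs hx,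
      val_eq p' m s x' q' hs hx', map_add, LinearMap.add_apply]
  have Hsmul1 : ∀ (r : R) (p : P0) (m : M), g0 (r • p) m = r • g0 p m := by
    intro r p m
    obtain ⟨s, hs⟩ := htors m
    obtain ⟨x, q, hx⟩ := hrep p s
    have hxx : d (r • x) = (r • p) - (s : R) • (r • q) := by
      rw [map_smul, hx]; module
    rw [val_eq (r • p) m s (r • x) (r • q) hs hxx, val_eq p m s x q hs hx,
      map_smul, LinearMap.smul_apply]
  have Hadd2 : ∀ (p : P0) (m m' : M), g0 p (m + m') = g0 p m + g0 p m' := by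
    intro p m m'
    obtain ⟨s, hs⟩ := htors m
    obtain ⟨s', hs'⟩ := htors m'
    have h1 : ((s * s' : S) : R) • (m + m') = 0 := by
      rw [smul_add, kill_left s s' m hs, kill_right s s' m' hs', add_zero]
    obtain ⟨x, q, hx⟩ := hrep p (s * s')
    rw [val_eq p (m + m') (s * s') x q h1 hx,
      val_eq p m (s * s') x q (kill_left s s' m hs) hx,
      val_eq p m' (s * s') x q (kill_right s s' m' hs') hx, map_add]
  have Hsmul2 : ∀ (r : R) (p : P0) (m : M), g0 p (r • m) = r • g0 p m := by
    intro r p m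
    obtain ⟨s, hs⟩ := htors m
    have h1 : (s : R) • (r • m) = 0 := by rw [smul_comm, hs, smul_zero]
    obtain ⟨x, q, hx⟩ := hrep p s
    rw [val_eq p (r • m) s x q h1 hx, val_eq p m s x q hs hx, map_smul]
  refine ⟨LinearMap.mk₂ R g0 (fun p p' m => Hadd1 p p' m) (fun r p m => Hsmul1 r p m)
    (fun p m m' => Hadd2 p m m') (fun r p m => Hsmul2 r p m), ?_⟩
  apply LinearMap.ext; intro y
  apply LinearMap.ext; intro m
  obtain ⟨s, hs⟩ := htors m
  have : d y = d y - (s : R) • (0 : P0) := by rw [smul_zero, sub_zero]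
  exact val_eq (d y) m s y 0 hs this
end Abstract

section Abstract2
variable {R : Type} [CommRing R] {S : Submonoid R}
variable {M C P2 P1 P0 : Type}
  [AddCommGroup M] [Module R M] [AddCommGroup C] [Module R C]
  [AddCommGroup P2] [Module R P2] [AddCommGroup P1] [Module R P1]
  [AddCommGroup P0] [Module R P0]

/-- Factor a map through a surjection whose kernel it kills. -/
lemma factor_surj (π : P0 →ₗ[R] Localization S) (hπ : Function.Surjective π)
    (u : P0 →ₗ[R] C) (hle : LinearMap.ker π ≤ LinearMap.ker u) :
    ∃ φ : Localization S →ₗ[R] C, φ ∘ₗ π = u := by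
  let e := π.quotKerEquivOfSurjective hπ
  refine ⟨((LinearMap.ker π).liftQ u hle) ∘ₗ (e.symm : Localization S →ₗ[R] _), ?_⟩
  apply LinearMap.ext; intro p
  have he : e.symm (π p) = Submodule.Quotient.mk p := by
    apply e.injective
    rw [e.apply_symm_apply]
    rfl
  simp only [LinearMap.comp_apply, LinearEquiv.coe_coe, he]
  exact Submodule.liftQ_apply _ u p

lemma lift_of_contra
    (hC1 : ∀ f : Localization S →ₗ[R] C, f = 0)
    (d2 : P2 →ₗ[R] P1) (d1 : P1 →ₗ[R] P0) (π : P0 →ₗ[R] Localization S)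
    (hπ : Function.Surjective π)
    (hk : LinearMap.ker π = LinearMap.range d1)
    (hlift : ∀ h : P1 →ₗ[R] C, h ∘ₗ d2 = 0 → ∃ k : P0 →ₗ[R] C, k ∘ₗ d1 = h)
    (f : P1 →ₗ[R] (M →ₗ[R] C)) (hf : f ∘ₗ d2 = 0) :
    ∃ g : P0 →ₗ[R] (M →ₗ[R] C), g ∘ₗ d1 = f := by
  have huniq : ∀ k k' : P0 →ₗ[R] C, k ∘ₗ d1 = k' ∘ₗ d1 → k = k' := by
    intro k k' h
    have hle : LinearMap.ker π ≤ LinearMap.ker (k - k') := by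
      rw [hk]
      rintro _ ⟨y, rfl⟩
      simp only [LinearMap.mem_ker, LinearMap.sub_apply]
      rw [sub_eq_zero]
      exact LinearMap.congr_fun h y
    obtain ⟨φ, hφ⟩ := factor_surj π hπ (k - k') hle
    rw [hC1 φ] at hφ
    have : k - k' = 0 := by rw [← hφ]; apply LinearMap.ext; intro p; rfl
    exact sub_eq_zero.mp this
  classical
  have hfm : ∀ m : M, (f.flip m) ∘ₗ d2 = 0 := by
    intro m
    apply LinearMap.ext; intro y
    exact LinearMap.congr_fun (LinearMap.congr_fun hf y) m
  set k0 : M → (P0 →ₗ[R] C) := fun m => (hlift (f.flip m) (hfm m)).choose with hk0def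
  have hk0 : ∀ m, (k0 m) ∘ₗ d1 = f.flip m := fun m => (hlift (f.flip m) (hfm m)).choose_spec
  have hadd : ∀ m m', k0 (m + m') = k0 m + k0 m' := by
    intro m m'
    apply huniq
    rw [hk0, map_add, LinearMap.add_comp, hk0, hk0]
  have hsmul : ∀ (r : R) m, k0 (r • m) = r • k0 m := by
    intro r m
    apply huniq
    rw [hk0, map_smul, LinearMap.smul_comp, hk0]
  set K : M →ₗ[R] (P0 →ₗ[R] C) :=
    { toFun := k0, map_add' := hadd, map_smul' := hsmul } with hK
  refine ⟨K.flip, ?_⟩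
  apply LinearMap.ext; intro y
  apply LinearMap.ext; intro m
  show K m (d1 y) = f y m
  have := LinearMap.congr_fun (hk0 m) y
  exact this

lemma hom_vanish_torsion (htors : ∀ x : M, ∃ s : S, (s : R) • x = 0)
    (φ : Localization S →ₗ[R] (M →ₗ[R] C)) : φ = 0 := by
  apply LinearMap.ext; intro n
  apply LinearMap.ext; intro m
  obtain ⟨s, hs⟩ := htors m
  obtain ⟨n', hn'⟩ := loc_div n s
  rw [← hn', map_smul, LinearMap.smul_apply, ← map_smul, hs, map_zero]
  rfl

lemma hom_vanish_contra (hC1 : ∀ f : Localization S →ₗ[R] C, f = 0)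
    (φ : Localization S →ₗ[R] (M →ₗ[R] C)) : φ = 0 := by
  apply LinearMap.ext; intro n
  apply LinearMap.ext; intro m
  have : φ.flip m = 0 := hC1 _
  have h2 := LinearMap.congr_fun this n
  simpa using h2
end Abstract2

section Bridge
variable (R : Type) [CommRing R]

lemma extBridge (A D : Type) [AddCommGroup A] [Module R A] [AddCommGroup D] [Module R D]
    (P : ProjectiveResolution (ModuleCat.of R A)) :
    Subsingleton (extGroup R A D 1) ↔
      ∀ f : P.complex.X 1 ⟶ ModuleCat.of R D, P.complex.d 2 1 ≫ f = 0 →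
        ∃ g : P.complex.X 0 ⟶ ModuleCat.of R D, P.complex.d 1 0 ≫ g = f := by
  have e := P.isoExt (R := R) 1 (ModuleCat.of R D)
  set Q := P.complex.linearYonedaObj R (ModuleCat.of R D) with hQ
  have h1 : Subsingleton (extGroup R A D 1) ↔ Subsingleton (Q.homology 1) :=
    Equiv.subsingleton_congr e.toLinearEquiv.toEquiv
  have h2 : Subsingleton (Q.homology 1) ↔ Q.ExactAt 1 := by
    rw [Q.exactAt_iff_isZero_homology]
    constructor
    · intro h; exact ModuleCat.isZero_of_subsingleton _
    · intro h
      refine ⟨fun a b => ?_⟩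
      have hid : 𝟙 (Q.homology 1) = 0 := h.eq_of_src _ _
      have ha : a = 0 := by simpa using congrArg (fun φ => φ.hom a) hid
      have hb : b = 0 := by simpa using congrArg (fun φ => φ.hom b) hid
      exact ha.trans hb.symm
  have hd12 : ∀ f : P.complex.X 1 ⟶ ModuleCat.of R D, (Q.sc' 0 1 2).g f = P.complex.d 2 1 ≫ f :=
    fun f => rfl
  have hd01 : ∀ g : P.complex.X 0 ⟶ ModuleCat.of R D, (Q.sc' 0 1 2).f g = P.complex.d 1 0 ≫ g :=
    fun g => rfl
  rw [h1, h2, Q.exactAt_iff' 0 1 2 (by simp) (by simp), ShortComplex.moduleCat_exact_iff]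
  constructor
  · intro H f hf
    obtain ⟨g, hg⟩ := H f (by rw [hd12, hf]; rfl)
    exact ⟨g, (hd01 g).symm.trans hg⟩
  · intro H f hf
    obtain ⟨g, hg⟩ := H f (by rw [← hd12 f]; exact hf)
    exact ⟨g, (hd01 g).trans hg⟩
end Bridge

/-- `Hom_R(M, C)` is an S-contramodule whenever `M` is S-torsion or `C` is
an S-contramodule. -/
theorem hom_is_contramodule
    (R : Type) [CommRing R] (S : Submonoid R)
    (M C : Type) [AddCommGroup M] [Module R M] [AddCommGroup C] [Module R C] :
    ((∀ x : M, ∃ s : S, (s : R) • x = 0) → IsSContramodule R S (M →ₗ[R] C)) ∧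
    (IsSContramodule R S C → IsSContramodule R S (M →ₗ[R] C)) := by
  obtain ⟨P⟩ := (HasProjectiveResolution.out (Z := ModuleCat.of R (Localization S)))
  set NN := ModuleCat.of R (Localization S) with hNN
  -- the augmentation as a linear map to the localization
  set ι := (HomologicalComplex.singleObjXSelf (ComplexShape.down ℕ) 0 NN).toLinearEquiv with hι
  set π0 : (P.complex.X 0 : Type) →ₗ[R] Localization S :=
    ι.toLinearMap ∘ₗ (P.π.f 0 : P.complex.X 0 ⟶ _).hom with hπ0
  have hπ0surj : Function.Surjective π0 := by
    have h1 : Function.Surjective (P.π.f 0) :=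
      (ModuleCat.epi_iff_surjective (P.π.f 0)).mp inferInstance
    exact ι.surjective.comp h1
  have hexact0 : LinearMap.range (P.complex.d 1 0).hom = LinearMap.ker (P.π.f 0).hom := by
    have := P.exact₀
    rw [ShortComplex.moduleCat_exact_iff_range_eq_ker] at this
    exact this
  have hker0 : LinearMap.ker π0 = LinearMap.range (P.complex.d 1 0).hom := by
    rw [hexact0]
    ext x
    have hx : π0 x = ι ((P.π.f 0) x) := rfl
    simp only [LinearMap.mem_ker, hx]
    exact ⟨fun h => ι.injective (h.trans (map_zero ι).symm), fun h => by rw [h, map_zero]⟩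
  have hexact1 : LinearMap.range (P.complex.d 2 1).hom = LinearMap.ker (P.complex.d 1 0).hom := by
    have := P.exact_succ 0
    rw [ShortComplex.moduleCat_exact_iff_range_eq_ker] at this
    exact this
  constructor
  · -- torsion case
    intro htors
    constructor
    · exact fun f => hom_vanish_torsion htors f
    · rw [extBridge R (Localization S) (M →ₗ[R] C) P]
      intro f hf
      have hfker : LinearMap.ker (P.complex.d 1 0).hom ≤ LinearMap.ker f.hom := by
        rw [← hexact1]
        rintro _ ⟨y, rfl⟩
        exact LinearMap.congr_fun (congrArg ModuleCat.Hom.hom hf) y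
      obtain ⟨g, hg⟩ := lift_of_torsion htors (P.complex.d 1 0).hom π0 hπ0surj hker0 f.hom hfker
      exact ⟨ModuleCat.ofHom g, ModuleCat.hom_ext hg⟩
  · -- contramodule case
    rintro ⟨hC1, hC2⟩
    constructor
    · exact fun f => hom_vanish_contra hC1 f
    · rw [extBridge R (Localization S) (M →ₗ[R] C) P]
      intro f hf
      have hlift : ∀ h : (P.complex.X 1 : Type) →ₗ[R] C,
          h ∘ₗ (P.complex.d 2 1).hom = 0 →
          ∃ k : (P.complex.X 0 : Type) →ₗ[R] C, k ∘ₗ (P.complex.d 1 0).hom = h := by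
        rw [extBridge R (Localization S) C P] at hC2
        intro h hh
        obtain ⟨k, hk⟩ := hC2 (ModuleCat.ofHom h) (ModuleCat.hom_ext hh)
        exact ⟨k.hom, congrArg ModuleCat.Hom.hom hk⟩
      obtain ⟨g, hg⟩ := lift_of_contra hC1 (P.complex.d 2 1).hom (P.complex.d 1 0).hom π0 hπ0surj hker0
        hlift f.hom (congrArg ModuleCat.Hom.hom hf)
      exact ⟨ModuleCat.ofHom g, ModuleCat.hom_ext hg⟩
end

section
/- Let R be a commutative ring and S ⊆ R a multiplicative subset such that the R-module S⁻¹R has projective dimension at most 1. Then the full subcategory of S-contramodule R-modules is closed under kernels, cokernels, extensions, and products in R-Mod; in particular it is an abelian category with exact inclusion into R-Mod. -/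
open CategoryTheory

/-- `M` has projective dimension at most 1 over `R`. -/
def HasProjDimLEOne (R : Type) [CommRing R] (M : Type) [AddCommGroup M] [Module R M] : Prop :=
  ∃ (ι : Type) (f : (ι →₀ R) →ₗ[R] M),
    Function.Surjective f ∧ Module.Projective R (LinearMap.ker f)

section Alg

variable {R : Type} [CommRing R] {K F : Type} [AddCommGroup K] [Module R K]
  [AddCommGroup F] [Module R F] (i : K →ₗ[R] F)

/-- surjectivity of restriction `Hom(F,M) → Hom(K,M)` (⟺ `Ext¹(L,M) = 0`). -/
def ResSurj (M : Type) [AddCommGroup M] [Module R M] : Prop :=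
  ∀ h : K →ₗ[R] M, ∃ g : F →ₗ[R] M, g ∘ₗ i = h

/-- injectivity of restriction (⟺ `Hom(L,M) = 0`). -/
def ResInj (M : Type) [AddCommGroup M] [Module R M] : Prop :=
  ∀ g : F →ₗ[R] M, g ∘ₗ i = 0 → g = 0

variable {i}

section
variable {C D : Type} [AddCommGroup C] [Module R C] [AddCommGroup D] [Module R D]

lemma ResInj.ker (hC : ResInj i C) (f : C →ₗ[R] D) : ResInj i (LinearMap.ker f) := by
  intro g hg
  have : (LinearMap.ker f).subtype ∘ₗ g = 0 := by
    apply hC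
    rw [LinearMap.comp_assoc, hg, LinearMap.comp_zero]
  ext x
  simpa using LinearMap.congr_fun this x

lemma ResSurj.ker (hC : ResSurj i C) (hD : ResInj i D) (f : C →ₗ[R] D) :
    ResSurj i (LinearMap.ker f) := by
  intro h
  obtain ⟨g, hg⟩ := hC ((LinearMap.ker f).subtype ∘ₗ h)
  have hfg : f ∘ₗ g = 0 := by
    apply hD
    rw [LinearMap.comp_assoc, hg, ← LinearMap.comp_assoc]
    ext x
    exact (h x).2
  refine ⟨g.codRestrict (LinearMap.ker f) (fun x => LinearMap.congr_fun hfg x), ?_⟩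
  ext x
  exact LinearMap.congr_fun hg x

lemma ResSurj.coker [Module.Projective R K] [Module.Projective R F]
    (hC : ResSurj i C) (hD : ResSurj i D) (hDi : ResInj i D) (f : C →ₗ[R] D) :
    (ResInj i (D ⧸ LinearMap.range f) ∧ ResSurj i (D ⧸ LinearMap.range f)) := by
  constructor
  · intro g hg
    obtain ⟨gg, hgg⟩ := Module.projective_lifting_property
      (LinearMap.range f).mkQ g (Submodule.mkQ_surjective _)
    have hmem : ∀ k : K, gg (i k) ∈ LinearMap.range f := by
      intro k
      have := LinearMap.congr_fun hg k
      simp only [LinearMap.comp_apply, LinearMap.zero_apply] at this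
      rw [← LinearMap.congr_fun hgg (i k)] at this
      simpa [Submodule.Quotient.mk_eq_zero] using this
    obtain ⟨u, hu⟩ := Module.projective_lifting_property f.rangeRestrict
      ((gg ∘ₗ i).codRestrict (LinearMap.range f) hmem) f.surjective_rangeRestrict
    have hfu : f ∘ₗ u = gg ∘ₗ i := by
      ext k
      exact congrArg Subtype.val (LinearMap.congr_fun hu k)
    obtain ⟨v, hv⟩ := hC u
    have : gg = f ∘ₗ v := by
      have h0 : (gg - f ∘ₗ v) ∘ₗ i = 0 := by
        rw [LinearMap.sub_comp, LinearMap.comp_assoc, hv, hfu, sub_self]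
      have := hDi _ h0
      rwa [sub_eq_zero] at this
    rw [← hgg, this]
    ext x
    simp [Submodule.Quotient.mk_eq_zero]
  · intro h
    obtain ⟨h', hh'⟩ := Module.projective_lifting_property
      (LinearMap.range f).mkQ h (Submodule.mkQ_surjective _)
    obtain ⟨g, hg⟩ := hD h'
    exact ⟨(LinearMap.range f).mkQ ∘ₗ g, by rw [LinearMap.comp_assoc, hg, hh']⟩

end

section Ext
variable {C' C C'' : Type} [AddCommGroup C'] [Module R C'] [AddCommGroup C] [Module R C]
  [AddCommGroup C''] [Module R C'']
  (j : C' →ₗ[R] C) (p : C →ₗ[R] C'')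

lemma resExtension [Module.Projective R F]
    (hj : Function.Injective j) (hp : Function.Surjective p)
    (hrange : LinearMap.range j = LinearMap.ker p)
    (h1 : ResInj i C') (h2 : ResSurj i C') (h3 : ResInj i C'') (h4 : ResSurj i C'') :
    ResInj i C ∧ ResSurj i C := by
  have factor : ∀ {T : Type} [AddCommGroup T] [Module R T] (g : T →ₗ[R] C),
      (∀ x, g x ∈ LinearMap.range j) → ∃ g' : T →ₗ[R] C', j ∘ₗ g' = g := by
    intro T _ _ g hg
    let e := LinearEquiv.ofInjective j hj
    refine ⟨e.symm.toLinearMap ∘ₗ (g.codRestrict (LinearMap.range j) hg), ?_⟩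
    ext x
    show j (e.symm ⟨g x, hg x⟩) = g x
    calc j (e.symm ⟨g x, hg x⟩) = ↑(e (e.symm ⟨g x, hg x⟩)) :=
          (LinearEquiv.ofInjective_apply j _).symm
      _ = ↑(⟨g x, hg x⟩ : LinearMap.range j) := by rw [e.apply_symm_apply]
      _ = g x := rfl
  constructor
  · intro g hg
    have hpg : p ∘ₗ g = 0 := h3 _ (by rw [LinearMap.comp_assoc, hg, LinearMap.comp_zero])
    have hmem : ∀ x, g x ∈ LinearMap.range j := by
      intro x
      rw [hrange]
      exact LinearMap.congr_fun hpg x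
    obtain ⟨g', hg'⟩ := factor g hmem
    have hgi : g' ∘ₗ i = 0 := by
      ext k
      apply hj
      have heq : j ((g' ∘ₗ i) k) = (g ∘ₗ i) k := by
        rw [← hg']; rfl
      rw [heq, hg]
      simp
    rw [← hg', h1 _ hgi, LinearMap.comp_zero]
  · intro h
    obtain ⟨g'', hg''⟩ := h4 (p ∘ₗ h)
    obtain ⟨gg, hgg⟩ := Module.projective_lifting_property p g'' hp
    have hmem : ∀ k, (h - gg ∘ₗ i) k ∈ LinearMap.range j := by
      intro k
      rw [hrange]
      have : p ∘ₗ (h - gg ∘ₗ i) = 0 := by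
        rw [LinearMap.comp_sub, ← LinearMap.comp_assoc, hgg, hg'', sub_self]
      exact LinearMap.congr_fun this k
    obtain ⟨u, hu⟩ := factor _ hmem
    obtain ⟨v, hv⟩ := h2 u
    refine ⟨gg + j ∘ₗ v, ?_⟩
    rw [LinearMap.add_comp, LinearMap.comp_assoc, hv, hu]
    abel

end Ext

section Prod
variable {ιP : Type} {M : ιP → Type} [∀ k, AddCommGroup (M k)] [∀ k, Module R (M k)]

lemma ResInj.pi (h : ∀ k, ResInj i (M k)) : ResInj i (∀ k, M k) := by
  intro g hg
  have key : ∀ k, (LinearMap.proj k : (∀ m, M m) →ₗ[R] M k) ∘ₗ g = 0 := fun k =>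
    h k _ (by rw [LinearMap.comp_assoc, hg, LinearMap.comp_zero])
  ext x k
  exact LinearMap.congr_fun (key k) x

lemma ResSurj.pi (h : ∀ k, ResSurj i (M k)) : ResSurj i (∀ k, M k) := by
  intro f
  choose g hg using fun k => h k ((LinearMap.proj k) ∘ₗ f)
  refine ⟨LinearMap.pi g, ?_⟩
  ext x k
  exact LinearMap.congr_fun (hg k) x

end Prod
end Alg

open CategoryTheory Limits

noncomputable section Bridge

variable {R : Type} [CommRing R] {ι L : Type} [AddCommGroup L] [Module R L]

instance : Module.Projective R PUnit := Module.Projective.of_basis (Module.Basis.empty _ (ι := Empty))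

variable (π : (ι →₀ R) →ₗ[R] L)

/-- The two-term complex `... → 0 → ker π → ι →₀ R`. -/
def resComplex : ChainComplex (ModuleCat R) ℕ :=
  ChainComplex.of
    (fun n => match n with
      | 0 => ModuleCat.of R (ι →₀ R)
      | 1 => ModuleCat.of R (LinearMap.ker π)
      | _ + 2 => ModuleCat.of R PUnit)
    (fun n => match n with
      | 0 => ModuleCat.ofHom (LinearMap.ker π).subtype
      | _ + 1 => 0)
    (fun n => match n with
      | 0 => zero_comp
      | _ + 1 => zero_comp)

@[simp] lemma resComplex_d_1_0 :
    (resComplex π).d 1 0 = ModuleCat.ofHom (LinearMap.ker π).subtype :=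
  by simp [resComplex, ChainComplex.of.d]

@[simp] lemma resComplex_d_succ (n : ℕ) : (resComplex π).d (n + 2) (n + 1) = 0 :=
  by simp [resComplex, ChainComplex.of.d]; rfl

/-- the short complex `ker π → (ι →₀ R) → L`. -/
def resSC : ShortComplex (ModuleCat R) :=
  ShortComplex.mk
    (ModuleCat.ofHom ((LinearMap.ker π).subtype) :
      ModuleCat.of R (LinearMap.ker π) ⟶ ModuleCat.of R (ι →₀ R))
    (ModuleCat.ofHom π : ModuleCat.of R (ι →₀ R) ⟶ ModuleCat.of R L)
    (by ext x; exact x.2)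

variable (hπ : Function.Surjective π) (hK : Module.Projective R (LinearMap.ker π))

include hπ hK in
def resolution : ProjectiveResolution (ModuleCat.of R L) where
  complex := resComplex π
  projective n := by
    match n with
    | 0 => exact (IsProjective.iff_projective _).mp inferInstance
    | 1 => exact (IsProjective.iff_projective _).mp hK
    | n + 2 => exact (IsProjective.iff_projective _).mp inferInstance
  π := (ChainComplex.toSingle₀Equiv _ _).symm ⟨ModuleCat.ofHom π, by
        rw [resComplex_d_1_0]
        ext x
        exact x.2⟩
  quasiIso := ⟨fun n => by
    cases n with
    | zero =>
      rw [ChainComplex.quasiIsoAt₀_iff, ShortComplex.quasiIso_iff_of_zeros']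
      rotate_left
      · rfl
      · rfl
      · rfl
      refine (ShortComplex.exact_and_epi_g_iff_of_iso
        (ShortComplex.isoMk (S₁ := resSC π) (S₂ := _)
          (Iso.refl _) (Iso.refl _) (Iso.refl _) ?_ ?_)).1 ⟨?_, ?_⟩
      · dsimp [resSC]
        simp
      · dsimp [resSC]
        simp
      · exact (ShortComplex.moduleCat_exact_iff_range_eq_ker _).2
          (Submodule.range_subtype _)
      · exact (ModuleCat.epi_iff_surjective _).2 hπ
    | succ n =>
      rw [quasiIsoAt_iff_exactAt' _ _ (ChainComplex.exactAt_succ_single_obj _ _)]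
      cases n with
      | zero =>
        rw [HomologicalComplex.exactAt_iff' _ 2 1 0 (by simp) (by simp)]
        apply (ShortComplex.moduleCat_exact_iff_range_eq_ker _).2
        dsimp only [HomologicalComplex.sc', HomologicalComplex.shortComplexFunctor']
        rw [show (resComplex π).d 2 1 = 0 from resComplex_d_succ π 0, resComplex_d_1_0]
        show LinearMap.range (0 : PUnit →ₗ[R] LinearMap.ker π) = LinearMap.ker (LinearMap.ker π).subtype
        rw [LinearMap.range_zero]
        exact (Submodule.ker_subtype _).symm
      | succ m =>
        rw [HomologicalComplex.exactAt_iff]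
        exact ShortComplex.exact_of_isZero_X₂ _
          (ModuleCat.isZero_of_subsingleton (ModuleCat.of R PUnit))⟩

end Bridge

noncomputable section Bridge2
variable {R : Type} [CommRing R] {ι L : Type} [AddCommGroup L] [Module R L]
  (π : (ι →₀ R) →ₗ[R] L)
  (hπ : Function.Surjective π) (hK : Module.Projective R (LinearMap.ker π))
  (M : Type) [AddCommGroup M] [Module R M]

lemma moduleCat_subsingleton_of_isZero {N : ModuleCat R} (h : Limits.IsZero N) :
    Subsingleton N := by
  have h0 : (𝟙 N : N ⟶ N) = 0 := h.eq_of_src _ _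
  refine ⟨fun a b => ?_⟩
  have ha := ConcreteCategory.congr_hom h0 a
  have hb := ConcreteCategory.congr_hom h0 b
  simp at ha hb
  rw [ha, hb]

include hπ hK in
lemma ext_one_subsingleton_iff :
    Subsingleton (((Ext R (ModuleCat R) 1).obj
        (Opposite.op (ModuleCat.of R L))).obj (ModuleCat.of R M)) ↔
      (∀ h : (LinearMap.ker π) →ₗ[R] M, ∃ g : (ι →₀ R) →ₗ[R] M,
        g ∘ₗ (LinearMap.ker π).subtype = h) := by
  classical
  set P := resolution π hπ hK with hP
  set CC := P.complex.linearYonedaObj R (ModuleCat.of R M) with hCC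
  have e := ProjectiveResolution.isoExt (R := R) P 1 (ModuleCat.of R M)
  have step1 : Subsingleton (((Ext R (ModuleCat R) 1).obj
      (Opposite.op (ModuleCat.of R L))).obj (ModuleCat.of R M)) ↔
      Subsingleton (CC.homology 1) :=
    Equiv.subsingleton_congr ((forget (ModuleCat R)).mapIso e).toEquiv
  rw [step1]
  have step2 : Subsingleton (CC.homology 1) ↔ CC.ExactAt 1 := by
    rw [HomologicalComplex.exactAt_iff_isZero_homology]
    exact ⟨fun h => @ModuleCat.isZero_of_subsingleton _ _ _ h,
      fun h => moduleCat_subsingleton_of_isZero h⟩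
  rw [step2, HomologicalComplex.exactAt_iff' CC 0 1 2 (by simp) (by simp),
    ShortComplex.moduleCat_exact_iff_range_eq_ker]
  have hker : LinearMap.ker ((CC.sc' 0 1 2).g.hom) = ⊤ := by
    apply LinearMap.ker_eq_top.2
    have : Subsingleton ((CC.sc' 0 1 2).X₃) := by
      show Subsingleton (ModuleCat.of R PUnit ⟶ ModuleCat.of R M)
      exact ⟨fun f g => ModuleCat.hom_ext (LinearMap.ext fun x => by
        rw [Subsingleton.elim x 0, map_zero, map_zero])⟩
    exact Subsingleton.elim _ _
  rw [hker, LinearMap.range_eq_top]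
  have hd : ∀ g : CC.X 0, (CC.sc' 0 1 2).f.hom g =
      ModuleCat.ofHom ((ModuleCat.Hom.hom g : (ι →₀ R) →ₗ[R] M) ∘ₗ (LinearMap.ker π).subtype) := by
    intro g
    rfl
  constructor
  · intro hs h
    obtain ⟨g, hg⟩ := hs (show (CC.sc' 0 1 2).X₂ from ModuleCat.ofHom h)
    exact ⟨g.hom, by rw [hd g] at hg; exact congrArg ModuleCat.Hom.hom hg⟩
  · intro hs h
    obtain ⟨g, hg⟩ := hs h.hom
    exact ⟨ModuleCat.ofHom g, (hd _).trans (ModuleCat.hom_ext hg)⟩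

end Bridge2

noncomputable section Assemble

variable {R : Type} [CommRing R] {ι L : Type} [AddCommGroup L] [Module R L]
  (π : (ι →₀ R) →ₗ[R] L)

include π in
lemma hom_zero_iff (hπ : Function.Surjective π)
    (M : Type) [AddCommGroup M] [Module R M] :
    (∀ f : L →ₗ[R] M, f = 0) ↔ ResInj (R := R) (K := ↥(LinearMap.ker π)) (F := (ι →₀ R)) ((LinearMap.ker π).subtype) M := by
  constructor
  · intro hM g hg
    have hle : LinearMap.ker π ≤ LinearMap.ker g := by
      intro x hx
      simpa using LinearMap.congr_fun hg ⟨x, hx⟩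
    set q : ((ι →₀ R) ⧸ LinearMap.ker π) →ₗ[R] M := (LinearMap.ker π).liftQ g hle with hq
    set e : ((ι →₀ R) ⧸ LinearMap.ker π) ≃ₗ[R] L := π.quotKerEquivOfSurjective hπ with he
    have hf : (q ∘ₗ (e.symm : L →ₗ[R] ((ι →₀ R) ⧸ LinearMap.ker π))) = 0 := hM _
    refine LinearMap.ext fun x => ?_
    have h1 : g x = q (Submodule.Quotient.mk x) := by simp [hq]
    have h2 : q (Submodule.Quotient.mk x) =
        (q ∘ₗ (e.symm : L →ₗ[R] ((ι →₀ R) ⧸ LinearMap.ker π))) (e (Submodule.Quotient.mk x)) := by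
      simp
    rw [LinearMap.zero_apply, h1, h2, hf]
    simp
  · intro hres f
    have : (f ∘ₗ π) ∘ₗ (LinearMap.ker π).subtype = 0 := by
      ext x
      rw [LinearMap.comp_apply, LinearMap.comp_apply, Submodule.subtype_apply, x.2, map_zero, LinearMap.zero_apply]
    have h0 := hres _ this
    refine LinearMap.ext fun y => ?_
    obtain ⟨x, rfl⟩ := hπ y
    simpa using LinearMap.congr_fun h0 x

variable (R) in
theorem contra_iff (S : Submonoid R) (π : (ι →₀ R) →ₗ[R] Localization S)
    (hπ : Function.Surjective π) (hK : Module.Projective R (LinearMap.ker π))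
    (M : Type) [AddCommGroup M] [Module R M] :
    IsSContramodule R S M ↔
      (ResInj (R := R) (K := ↥(LinearMap.ker π)) (F := (ι →₀ R)) ((LinearMap.ker π).subtype) M ∧ ResSurj (R := R) (K := ↥(LinearMap.ker π)) (F := (ι →₀ R)) ((LinearMap.ker π).subtype) M) := by
  unfold IsSContramodule
  rw [hom_zero_iff π hπ M]
  have : Subsingleton (extGroup R (Localization S) M 1) ↔
      ResSurj (R := R) (K := ↥(LinearMap.ker π)) (F := (ι →₀ R)) ((LinearMap.ker π).subtype) M := ext_one_subsingleton_iff π hπ hK M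
  rw [this]

end Assemble

/-- If `pd_R S⁻¹R ≤ 1` then the S-contramodule R-modules are closed under kernels,
cokernels, extensions, and products in `R`-Mod (hence form an abelian category with
exact inclusion). -/
theorem contramodule_category_closure
    (R : Type) [CommRing R] (S : Submonoid R)
    (hpd : HasProjDimLEOne R (Localization S)) :
    -- kernels
    (∀ (C D : Type) [AddCommGroup C] [Module R C] [AddCommGroup D] [Module R D],
      IsSContramodule R S C → IsSContramodule R S D →
      ∀ f : C →ₗ[R] D, IsSContramodule R S (LinearMap.ker f)) ∧
    -- cokernels
    (∀ (C D : Type) [AddCommGroup C] [Module R C] [AddCommGroup D] [Module R D],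
      IsSContramodule R S C → IsSContramodule R S D →
      ∀ f : C →ₗ[R] D, IsSContramodule R S (D ⧸ LinearMap.range f)) ∧
    -- extensions
    (∀ (C' C C'' : Type) [AddCommGroup C'] [Module R C'] [AddCommGroup C] [Module R C]
        [AddCommGroup C''] [Module R C'']
        (i : C' →ₗ[R] C) (p : C →ₗ[R] C''),
      Function.Injective i → Function.Surjective p →
      LinearMap.range i = LinearMap.ker p →
      IsSContramodule R S C' → IsSContramodule R S C'' → IsSContramodule R S C) ∧
    -- products
    (∀ (ι : Type) (M : ι → Type) [∀ i, AddCommGroup (M i)] [∀ i, Module R (M i)],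
      (∀ i, IsSContramodule R S (M i)) → IsSContramodule R S (∀ i, M i)) := by
  obtain ⟨ι, π, hπ, hK⟩ := hpd
  haveI : Module.Projective R ↥(LinearMap.ker π) := hK
  refine ⟨?_, ?_, ?_, ?_⟩
  · intro C D _ _ _ _ hC hD f
    rw [contra_iff R S π hπ hK] at hC hD ⊢
    exact ⟨hC.1.ker f, hC.2.ker hD.1 f⟩
  · intro C D _ _ _ _ hC hD f
    rw [contra_iff R S π hπ hK] at hC hD ⊢
    exact hC.2.coker hD.2 hD.1 f
  · intro C' C C'' _ _ _ _ _ _ j p hj hp hrange hC' hC''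
    rw [contra_iff R S π hπ hK] at hC' hC'' ⊢
    exact resExtension j p hj hp hrange hC'.1 hC'.2 hC''.1 hC''.2
  · intro ιP M _ _ hM
    rw [contra_iff R S π hπ hK]
    simp only [contra_iff R S π hπ hK] at hM
    exact ⟨ResInj.pi (fun k => (hM k).1), ResSurj.pi (fun k => (hM k).2)⟩
end
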